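/- Let p ∈ [1, ∞) with p ≠ 2 and let d ∈ ℤ_{>0}. An idempotent e in M_d(ℂ), regarded as an operator on ℓ^p_d, is hermitian (i.e., ‖exp(iλe)‖ = 1 for all λ ∈ ℝ in the operator norm on ℓ^p_d) if and only if e is a diagonal matrix with entries in {0,1}. -/

import Mathlib

open scoped ENNReal

/-- A `d × d` complex matrix, viewed as a bounded operator on `ℓ^p_d`. -/
noncomputable def matrixLp (p : ℝ≥0∞) [Fact (1 ≤ p)] {d : ℕ}
    (M : Matrix (Fin d) (Fin d) ℂ) :
    PiLp p (fun _ : Fin d => ℂ) →L[ℂ] PiLp p (fun _ : Fin d => ℂ) :=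
  LinearMap.toContinuousLinearMap
    ((WithLp.linearEquiv p ℂ (∀ _ : Fin d, ℂ)).symm.toLinearMap ∘ₗ
      M.mulVecLin ∘ₗ (WithLp.linearEquiv p ℂ (∀ _ : Fin d, ℂ)).toLinearMap)

section Aux

set_option maxHeartbeats 1000000 in
lemma exp_idem {A : Type*} [NormedRing A] [NormedAlgebra ℂ A] [CompleteSpace A]
    (E : A) (hE : E * E = E) (c : ℂ) :
    NormedSpace.exp (c • E) = 1 + (Complex.exp c - 1) • E := by
  have hpow : ∀ n : ℕ, E ^ (n + 1) = E := by
    intro n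
    induction n with
    | zero => simp
    | succ k ih => rw [pow_succ, ih, hE]
  rw [NormedSpace.exp_eq_tsum ℂ]
  have h1 : ∀ n : ℕ, ((Nat.factorial n : ℂ))⁻¹ • (c • E) ^ n
      = (((Nat.factorial n : ℂ))⁻¹ * c ^ n) • E ^ n := by
    intro n; rw [smul_pow, smul_smul]
  simp_rw [h1]
  have hs : Summable fun n : ℕ => (((Nat.factorial n : ℂ))⁻¹ * c ^ n) • E ^ n := by
    have := NormedSpace.expSeries_summable' (𝕂 := ℂ) (c • E)
    simpa [h1] using this
  rw [Summable.tsum_eq_zero_add hs]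
  have h2 : ∀ n : ℕ, (((Nat.factorial (n+1) : ℂ))⁻¹ * c ^ (n+1)) • E ^ (n+1)
      = (((Nat.factorial (n+1) : ℂ))⁻¹ * c ^ (n+1)) • E := by
    intro n; rw [hpow]
  simp only [pow_zero, Nat.factorial_zero, Nat.cast_one, inv_one, one_mul, one_smul]
  simp_rw [h2]
  have hsc : Summable fun n : ℕ => ((Nat.factorial n : ℂ))⁻¹ * c ^ n := by
    simpa [NormedSpace.exp_eq_tsum] using NormedSpace.expSeries_summable' (𝕂 := ℂ) c
  have hsc1 : Summable fun n : ℕ => ((Nat.factorial (n+1) : ℂ))⁻¹ * c ^ (n+1) :=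
    (summable_nat_add_iff 1).mpr hsc
  rw [Summable.tsum_smul_const hsc1]
  congr 1
  have : (∑' n : ℕ, ((Nat.factorial (n+1) : ℂ))⁻¹ * c ^ (n+1)) = Complex.exp c - 1 := by
    have hexp : Complex.exp c = ∑' n : ℕ, ((Nat.factorial n : ℂ))⁻¹ * c ^ n := by
      rw [Complex.exp_eq_exp_ℂ, NormedSpace.exp_eq_tsum ℂ]
      simp [smul_eq_mul]
    rw [hexp, Summable.tsum_eq_zero_add hsc]
    simp
  rw [this]

variable (p : ℝ≥0∞) [Fact (1 ≤ p)] {d : ℕ}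

lemma matrixLp_apply (M : Matrix (Fin d) (Fin d) ℂ) (x : PiLp p (fun _ : Fin d => ℂ))
    (j : Fin d) : matrixLp p M x j = ∑ k, M j k * x k := rfl

lemma matrixLp_one : matrixLp p (1 : Matrix (Fin d) (Fin d) ℂ) = 1 := by
  ext x j
  simp [matrixLp_apply, Matrix.one_apply, Finset.sum_ite_eq]

lemma matrixLp_mul (M N : Matrix (Fin d) (Fin d) ℂ) :
    matrixLp p (M * N) = matrixLp p M * matrixLp p N := by
  ext x j
  simp only [ContinuousLinearMap.mul_apply, matrixLp_apply, Matrix.mul_apply,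
    Finset.sum_mul, Finset.mul_sum]
  rw [Finset.sum_comm]
  simp [mul_assoc]

lemma matrixLp_add (M N : Matrix (Fin d) (Fin d) ℂ) :
    matrixLp p (M + N) = matrixLp p M + matrixLp p N := by
  ext x j
  simp [matrixLp_apply, Matrix.add_apply, add_mul, Finset.sum_add_distrib]

lemma matrixLp_smul (c : ℂ) (M : Matrix (Fin d) (Fin d) ℂ) :
    matrixLp p (c • M) = c • matrixLp p M := by
  ext x j
  simp [matrixLp_apply, Matrix.smul_apply, Finset.mul_sum, mul_assoc]

lemma exp_matrixLp (e : Matrix (Fin d) (Fin d) ℂ) (he : e * e = e) (c : ℂ) :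
    NormedSpace.exp (c • matrixLp p e) = matrixLp p (1 + (Complex.exp c - 1) • e) := by
  have hEE : matrixLp p e * matrixLp p e = matrixLp p e := by
    rw [← matrixLp_mul, he]
  rw [exp_idem _ hEE c, matrixLp_add, matrixLp_one, matrixLp_smul]

end Aux

section Scalar

lemma scalar_core (q : ℝ) (hq0 : 0 < q) (hq1 : q ≠ 1) (γ B : ℝ) (hB : 0 ≤ B)
    (H : ∀ s ∈ Set.Icc (0:ℝ) 2, (1 - 2*γ*s) ^ q + B * (2*s) ^ q = 1) :
    γ = 0 ∧ B = 0 := by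
  have h1 : HasDerivAt (fun s : ℝ => 1 - 2*γ*s) (-(2*γ)) 0 := by
    simpa using ((hasDerivAt_id (0:ℝ)).const_mul (2*γ)).const_sub 1
  have h3 : HasDerivAt (fun s : ℝ => (1 - 2*γ*s) ^ q) (-(2*γ*q)) 0 := by
    have h2 : HasDerivAt (fun x : ℝ => x ^ q) (q * (1:ℝ) ^ (q - 1))
        ((fun s : ℝ => 1 - 2*γ*s) 0) := by
      simpa using Real.hasDerivAt_rpow_const (x := 1) (p := q) (Or.inl one_ne_zero)
    have h4 := h2.comp 0 h1
    rw [show q * (1:ℝ) ^ (q - 1) * -(2 * γ) = -(2*γ*q) by rw [Real.one_rpow]; ring] at h4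
    exact h4
  have hslope : Filter.Tendsto (fun s : ℝ => ((1 - 2*γ*s) ^ q - 1) / s)
      (nhdsWithin 0 (Set.Ioi 0)) (nhds (-(2*γ*q))) := by
    have h5 := hasDerivAt_iff_tendsto_slope.mp h3
    have h4 : nhdsWithin (0:ℝ) (Set.Ioi 0) ≤ nhdsWithin 0 {0}ᶜ :=
      nhdsWithin_mono _ (by intro x hx; exact (ne_of_gt hx))
    refine (h5.mono_left h4).congr' ?_
    filter_upwards [self_mem_nhdsWithin] with s hs
    simp only [slope_fun_def_field, sub_zero]
    norm_num [Real.one_rpow]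
  have hid : ∀ᶠ s in nhdsWithin (0:ℝ) (Set.Ioi 0),
      ((1 - 2*γ*s) ^ q - 1) / s = -(B * 2 ^ q * s ^ (q-1)) := by
    filter_upwards [Ioo_mem_nhdsGT_of_mem (Set.mem_Ico.mpr ⟨le_refl (0:ℝ), two_pos⟩)]
      with s hs
    have hs0 : 0 < s := hs.1
    have hH := H s ⟨hs0.le, hs.2.le⟩
    have h2s : (2*s) ^ q = 2 ^ q * s ^ q := Real.mul_rpow (by norm_num) hs0.le
    have hnum : (1 - 2*γ*s) ^ q - 1 = -(B * (2 ^ q * s ^ q)) := by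
      rw [← h2s]; linarith
    rw [hnum, Real.rpow_sub hs0, Real.rpow_one]
    field_simp [hs0.ne']
  have hslope2 : Filter.Tendsto (fun s : ℝ => -(B * 2 ^ q * s ^ (q-1)))
      (nhdsWithin 0 (Set.Ioi 0)) (nhds (-(2*γ*q))) := hslope.congr' hid
  have hγ_of_zero : Filter.Tendsto (fun s : ℝ => -(B * 2 ^ q * s ^ (q-1)))
      (nhdsWithin 0 (Set.Ioi 0)) (nhds 0) → γ = 0 := by
    intro hz
    have h0 : -(2*γ*q) = 0 := tendsto_nhds_unique hslope2 hz
    have := neg_eq_zero.mp h0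
    rcases mul_eq_zero.mp this with h | h
    · rcases mul_eq_zero.mp h with h' | h'
      · norm_num at h'
      · exact h'
    · exact absurd h hq0.ne'
  rcases lt_or_gt_of_ne hq1 with hlt | hgt
  · -- q < 1
    have hB0 : B = 0 := by
      by_contra hBne
      have hBpos : 0 < B := lt_of_le_of_ne hB (Ne.symm hBne)
      have htop : Filter.Tendsto (fun s : ℝ => s ^ (q-1))
          (nhdsWithin 0 (Set.Ioi 0)) Filter.atTop := by
        have hinv : Filter.Tendsto (fun s : ℝ => s⁻¹) (nhdsWithin 0 (Set.Ioi 0))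
            Filter.atTop := tendsto_inv_nhdsGT_zero
        have hr : Filter.Tendsto (fun x : ℝ => x ^ (1-q)) Filter.atTop Filter.atTop :=
          tendsto_rpow_atTop (by linarith)
        refine (hr.comp hinv).congr' ?_
        filter_upwards [self_mem_nhdsWithin] with s hs
        have hs0 : (0:ℝ) < s := hs
        simp only [Function.comp]
        rw [Real.inv_rpow hs0.le, ← Real.rpow_neg hs0.le]
        ring_nf
      have h5 : Filter.Tendsto (fun s : ℝ => (B * 2 ^ q) * s ^ (q-1))
          (nhdsWithin 0 (Set.Ioi 0)) Filter.atTop :=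
        htop.const_mul_atTop (by positivity)
      have hbot : Filter.Tendsto (fun s : ℝ => -(B * 2 ^ q * s ^ (q-1)))
          (nhdsWithin 0 (Set.Ioi 0)) Filter.atBot := by
        have h6 := Filter.tendsto_neg_atTop_atBot.comp h5
        exact h6.congr (fun s => by simp [Function.comp])
      exact not_tendsto_nhds_of_tendsto_atBot hbot _ hslope2
    refine ⟨hγ_of_zero ?_, hB0⟩
    simpa [hB0] using (tendsto_const_nhds :
      Filter.Tendsto (fun _ : ℝ => (0:ℝ)) (nhdsWithin 0 (Set.Ioi 0)) (nhds 0))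
  · -- q > 1
    have hzero : Filter.Tendsto (fun s : ℝ => s ^ (q-1))
        (nhdsWithin 0 (Set.Ioi 0)) (nhds 0) := by
      have hc : ContinuousAt (fun s : ℝ => s ^ (q-1)) 0 :=
        Real.continuousAt_rpow_const 0 (q-1) (Or.inr (by linarith))
      have h7 := (hc.continuousWithinAt (s := Set.Ioi 0)).tendsto
      simpa [Real.zero_rpow (by linarith : q - 1 ≠ 0)] using h7
    have hγ : γ = 0 := by
      apply hγ_of_zero
      have := (hzero.const_mul (B * 2 ^ q)).neg
      simpa using this
    refine ⟨hγ, ?_⟩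
    have hH1 := H 1 (by norm_num)
    rw [hγ] at hH1
    norm_num [Real.one_rpow] at hH1
    have h2q : (0:ℝ) < (2:ℝ) ^ q := Real.rpow_pos_of_pos two_pos q
    rcases hH1 with h | h
    · exact h
    · exact absurd h h2q.ne'

lemma column (p' : ℝ) (hp'1 : 1 ≤ p') (hp'2 : p' ≠ 2) (a : ℂ) (B : ℝ) (hB : 0 ≤ B)
    (H : ∀ l : ℝ, ‖1 + (Complex.exp ((l:ℂ) * Complex.I) - 1) * a‖ ^ p'
        + ‖Complex.exp ((l:ℂ) * Complex.I) - 1‖ ^ p' * B = 1) :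
    (a = 0 ∨ a = 1) ∧ B = 0 := by
  set x := a.re with hx
  set y := a.im with hy
  have hN : ∀ l : ℝ, Complex.normSq (1 + (Complex.exp ((l:ℂ) * Complex.I) - 1) * a)
      = 1 - 2*(1 - Real.cos l)*(x - x^2 - y^2) - 2*(Real.sin l)*y := by
    intro l
    have hpyth := Real.sin_sq_add_cos_sq l
    simp only [Complex.normSq_apply, Complex.add_re, Complex.add_im, Complex.mul_re,
      Complex.mul_im, Complex.sub_re, Complex.sub_im, Complex.one_re, Complex.one_im,
      Complex.exp_ofReal_mul_I_re, Complex.exp_ofReal_mul_I_im]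
    ring_nf
    nlinarith [hpyth]
  have hN2 : ∀ l : ℝ, Complex.normSq (Complex.exp ((l:ℂ) * Complex.I) - 1)
      = 2*(1 - Real.cos l) := by
    intro l
    have hpyth := Real.sin_sq_add_cos_sq l
    simp only [Complex.normSq_apply, Complex.sub_re, Complex.sub_im, Complex.one_re,
      Complex.one_im, Complex.exp_ofReal_mul_I_re, Complex.exp_ofReal_mul_I_im]
    nlinarith [hpyth]
  have hp'0 : p' ≠ 0 := by linarith
  have habs : ∀ w : ℂ, ‖w‖ ^ p' = Complex.normSq w ^ (p'/2) := by
    intro w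
    rw [Complex.norm_def, Real.sqrt_eq_rpow, ← Real.rpow_mul (Complex.normSq_nonneg w)]
    congr 1
    ring
  have hy0 : y = 0 := by
    have hkey : ∀ l : ℝ, Complex.normSq (1 + (Complex.exp ((l:ℂ) * Complex.I) - 1) * a)
        = Complex.normSq (1 + (Complex.exp ((-l:ℂ) * Complex.I) - 1) * a) := by
      intro l
      have h1 := H l
      have h2 := H (-l)
      push_cast at h2
      have habs2 : ‖Complex.exp ((-l:ℂ) * Complex.I) - 1‖
          = ‖Complex.exp ((l:ℂ) * Complex.I) - 1‖ := by
        have hconj : Complex.exp ((-l:ℂ) * Complex.I) - 1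
            = (starRingEnd ℂ) (Complex.exp ((l:ℂ) * Complex.I) - 1) := by
          rw [map_sub, ← Complex.exp_conj, map_one]
          congr 2
          simp [map_mul, Complex.conj_I, Complex.conj_ofReal]
        rw [hconj, Complex.norm_conj]
      rw [habs2] at h2
      have heq : ‖1 + (Complex.exp ((l:ℂ) * Complex.I) - 1) * a‖ ^ p'
          = ‖1 + (Complex.exp ((-l:ℂ) * Complex.I) - 1) * a‖ ^ p' := by
        linarith
      have := Real.rpow_left_injOn hp'0 (by simp [Set.mem_setOf_eq, norm_nonneg])
        (by simp [Set.mem_setOf_eq, norm_nonneg]) heq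
      rw [← Complex.sq_norm, ← Complex.sq_norm, this]
    have h3 := hkey (Real.pi/2)
    rw [hN, ← Complex.ofReal_neg, hN] at h3
    simp [Real.cos_pi_div_two, Real.sin_pi_div_two, Real.cos_neg, Real.sin_neg] at h3
    linarith
  set γ : ℝ := x - x^2 with hγdef
  have hcore : γ = 0 ∧ B = 0 := by
    apply scalar_core (p'/2) (by linarith) (by intro h; apply hp'2; linarith) γ B hB
    intro s hs
    set l := Real.arccos (1 - s) with hl
    have hcos : Real.cos l = 1 - s :=
      Real.cos_arccos (by linarith [hs.2]) (by linarith [hs.1])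
    have hH := H l
    rw [habs, habs, hN, hN2, hcos] at hH
    rw [hy0] at hH
    have h1 : 1 - 2*(1-(1-s))*(x - x^2 - 0^2) - 2*(Real.sin l)*0 = 1 - 2*γ*s := by ring
    have h2 : 2*(1-(1-s)) = 2*s := by ring
    rw [h1, h2] at hH
    linarith
  refine ⟨?_, hcore.2⟩
  have hγ0 : x - x^2 = 0 := hcore.1
  have : x * (1 - x) = 0 := by ring_nf; linarith [hγ0]
  rcases mul_eq_zero.mp this with h | h
  · left; apply Complex.ext <;> simp [← hx, ← hy, h, hy0]
  · right; apply Complex.ext <;> simp [← hx, ← hy, hy0]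
    linarith

end Scalar

theorem stmt_12 (p : ℝ≥0∞) [Fact (1 ≤ p)] (hp : p ≠ ⊤) (hp2 : p ≠ 2) (d : ℕ) (hd : 0 < d)
    (e : Matrix (Fin d) (Fin d) ℂ) (he : e * e = e) :
    (∀ l : ℝ, ‖NormedSpace.exp (((l : ℂ) * Complex.I) • matrixLp p e)‖ = 1) ↔
      (∀ j k : Fin d, (j ≠ k → e j k = 0) ∧ (e j j = 0 ∨ e j j = 1)) := by
  have hp1 : (1 : ℝ≥0∞) ≤ p := Fact.out
  set p' : ℝ := p.toReal with hp'def
  have hp'1 : 1 ≤ p' := by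
    have := ENNReal.toReal_mono hp hp1
    simpa using this
  have hp'pos : 0 < p' := lt_of_lt_of_le one_pos hp'1
  have hp'0 : p' ≠ 0 := hp'pos.ne'
  have hp'2 : p' ≠ 2 := by
    intro h
    apply hp2
    have h2 : ((2 : ℝ≥0∞)).toReal = 2 := by norm_num
    exact (ENNReal.toReal_eq_toReal_iff' hp (by norm_num)).mp (by rw [h2, ← hp'def]; exact h)
  -- basis vectors
  have hδnorm : ∀ k : Fin d, ‖(WithLp.equiv p (∀ _ : Fin d, ℂ)).symm (Pi.single k 1)‖ = 1 := by
    intro k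
    rw [WithLp.equiv_symm_apply, PiLp.norm_toLp_single]
    exact norm_one
  constructor
  · -- forward
    intro hH j k
    -- isometry property
    have hunit : ∀ l : ℝ,
        NormedSpace.exp ((((-l : ℝ) : ℂ) * Complex.I) • matrixLp p e) *
          NormedSpace.exp (((l : ℂ) * Complex.I) • matrixLp p e) = 1 := by
      intro l
      rw [exp_matrixLp p e he, exp_matrixLp p e he, ← matrixLp_mul]
      set c1 : ℂ := Complex.exp (((-l : ℝ) : ℂ) * Complex.I) - 1 with hc1
      set c2 : ℂ := Complex.exp (((l : ℝ) : ℂ) * Complex.I) - 1 with hc2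
      have hzz : Complex.exp (((-l : ℝ) : ℂ) * Complex.I) *
          Complex.exp (((l : ℝ) : ℂ) * Complex.I) = 1 := by
        rw [← Complex.exp_add]
        have harg : ((-l : ℝ) : ℂ) * Complex.I + ((l : ℝ) : ℂ) * Complex.I = 0 := by
          push_cast; ring
        rw [harg, Complex.exp_zero]
      have hexpand : (1 + c1 • e) * (1 + c2 • e) = 1 + (c1 + c2 + c1 * c2) • e := by
        simp only [mul_add, add_mul, one_mul, mul_one, Algebra.mul_smul_comm,
          Algebra.smul_mul_assoc, smul_add, smul_smul, he, add_smul]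
        module
      have hcoef : c1 + c2 + c1 * c2 = 0 := by
        have h11 : c1 + c2 + c1 * c2 = Complex.exp (((-l : ℝ) : ℂ) * Complex.I) *
            Complex.exp (((l : ℝ) : ℂ) * Complex.I) - 1 := by
          rw [hc1, hc2]; ring
        rw [h11, hzz]; ring
      rw [hexpand, hcoef, zero_smul, add_zero, matrixLp_one]
    have hiso : ∀ (l : ℝ) (x : PiLp p (fun _ : Fin d => ℂ)),
        ‖NormedSpace.exp (((l : ℂ) * Complex.I) • matrixLp p e) x‖ = ‖x‖ := by
      intro l x
      set T := NormedSpace.exp (((l : ℂ) * Complex.I) • matrixLp p e) with hT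
      set T' := NormedSpace.exp ((((-l : ℝ) : ℂ) * Complex.I) • matrixLp p e) with hT'
      have hTT : T' * T = 1 := hunit l
      have h1 : ‖T x‖ ≤ ‖x‖ := by
        calc ‖T x‖ ≤ ‖T‖ * ‖x‖ := T.le_opNorm x
        _ = ‖x‖ := by rw [hH l, one_mul]
      have h2 : ‖x‖ ≤ ‖T x‖ := by
        have : T' (T x) = x := by
          rw [← ContinuousLinearMap.mul_apply, hTT, ContinuousLinearMap.one_apply]
        calc ‖x‖ = ‖T' (T x)‖ := by rw [this]
        _ ≤ ‖T'‖ * ‖T x‖ := T'.le_opNorm _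
        _ = ‖T x‖ := by rw [hH (-l), one_mul]
      linarith
    -- column condition for a fixed index k₀
    have hcol : ∀ k₀ : Fin d, (e k₀ k₀ = 0 ∨ e k₀ k₀ = 1) ∧
        ∀ j₀ : Fin d, j₀ ≠ k₀ → e j₀ k₀ = 0 := by
      intro k₀
      set B : ℝ := ∑ j₀ ∈ Finset.univ.erase k₀, ‖e j₀ k₀‖ ^ p' with hBdef
      have hBnonneg : 0 ≤ B := by
        apply Finset.sum_nonneg
        intro i _
        positivity
      have hsum : ∀ l : ℝ,
          ‖1 + (Complex.exp ((l:ℂ) * Complex.I) - 1) * e k₀ k₀‖ ^ p'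
            + ‖Complex.exp ((l:ℂ) * Complex.I) - 1‖ ^ p' * B = 1 := by
        intro l
        set z : ℂ := Complex.exp ((l:ℂ) * Complex.I) with hz
        set A : Matrix (Fin d) (Fin d) ℂ := 1 + (z - 1) • e with hA
        set δ : PiLp p (fun _ : Fin d => ℂ) :=
          (WithLp.equiv p (∀ _ : Fin d, ℂ)).symm (Pi.single k₀ 1) with hδ
        have happ : NormedSpace.exp (((l : ℂ) * Complex.I) • matrixLp p e) δ
            = matrixLp p A δ := by
          rw [exp_matrixLp p e he]
        have hval : ∀ j₀ : Fin d, (matrixLp p A δ) j₀ = A j₀ k₀ := by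
          intro j₀
          rw [matrixLp_apply]
          simp only [hδ, WithLp.equiv_symm_apply, PiLp.toLp_apply]
          rw [Finset.sum_eq_single k₀]
          · simp
          · intro i _ hne
            simp [Pi.single_eq_of_ne hne]
          · intro h; exact absurd (Finset.mem_univ k₀) h
        have hnorm1 : ‖matrixLp p A δ‖ = 1 := by
          rw [← happ, hiso l δ, hδnorm k₀]
        have hnormsum : (∑ j₀ : Fin d, ‖(matrixLp p A δ) j₀‖ ^ p') ^ (1/p') = 1 := by
          rw [← PiLp.norm_eq_sum (by rw [← hp'def]; exact hp'pos) (matrixLp p A δ)]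
          exact hnorm1
        have hS : (∑ j₀ : Fin d, ‖(matrixLp p A δ) j₀‖ ^ p') = 1 := by
          have hSnn : 0 ≤ ∑ j₀ : Fin d, ‖(matrixLp p A δ) j₀‖ ^ p' := by
            apply Finset.sum_nonneg; intro i _; positivity
          have h10 : ((∑ j₀ : Fin d, ‖(matrixLp p A δ) j₀‖ ^ p') ^ (1/p')) ^ p'
              = 1 ^ (p' : ℝ) := by rw [hnormsum]
          rw [← Real.rpow_mul hSnn, one_div, inv_mul_cancel₀ hp'0, Real.rpow_one,
            Real.one_rpow] at h10
          exact h10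
        simp_rw [hval] at hS
        -- split off j₀ = k₀
        rw [← Finset.add_sum_erase _ _ (Finset.mem_univ k₀)] at hS
        have hAkk : A k₀ k₀ = 1 + (z - 1) * e k₀ k₀ := by
          simp [hA, Matrix.add_apply, Matrix.one_apply, Matrix.smul_apply, smul_eq_mul]
        have hAoff : ∀ j₀ ∈ Finset.univ.erase k₀, ‖A j₀ k₀‖ ^ p'
            = ‖z - 1‖ ^ p' * ‖e j₀ k₀‖ ^ p' := by
          intro j₀ hj₀
          have hne : j₀ ≠ k₀ := Finset.ne_of_mem_erase hj₀
          have : A j₀ k₀ = (z - 1) * e j₀ k₀ := by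
            simp [hA, Matrix.add_apply, Matrix.one_apply_ne hne, Matrix.smul_apply,
              smul_eq_mul]
          rw [this, norm_mul]
          rw [Real.mul_rpow (norm_nonneg _) (norm_nonneg _)]
        rw [Finset.sum_congr rfl hAoff, ← Finset.mul_sum, hAkk] at hS
        rw [← hS]
      have hc := column p' hp'1 hp'2 (e k₀ k₀) B hBnonneg hsum
      refine ⟨hc.1, ?_⟩
      intro j₀ hj₀
      have hBzero := hc.2
      have : ∀ i ∈ Finset.univ.erase k₀, ‖e i k₀‖ ^ p' = 0 := by
        have hnn : ∀ i ∈ Finset.univ.erase k₀, 0 ≤ ‖e i k₀‖ ^ p' := by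
          intro i _; positivity
        exact (Finset.sum_eq_zero_iff_of_nonneg hnn).mp hBzero
      have h0 := this j₀ (Finset.mem_erase.mpr ⟨hj₀, Finset.mem_univ j₀⟩)
      have : ‖e j₀ k₀‖ = 0 := by
        by_contra hne
        have : 0 < ‖e j₀ k₀‖ := lt_of_le_of_ne (norm_nonneg _) (Ne.symm hne)
        have := Real.rpow_pos_of_pos this p'
        linarith
      exact norm_eq_zero.mp this
    exact ⟨fun hjk => (hcol k).2 j hjk, (hcol j).1⟩
  · -- backward
    intro hdiag l
    rw [exp_matrixLp p e he]
    set z : ℂ := Complex.exp ((l:ℂ) * Complex.I) with hz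
    set A : Matrix (Fin d) (Fin d) ℂ := 1 + (z - 1) • e with hA
    have hzabs : ‖z‖ = 1 := by
      rw [hz, Complex.norm_exp]
      simp
    have hAdiagnorm : ∀ j : Fin d, ‖A j j‖ = 1 := by
      intro j
      have : A j j = 1 + (z - 1) * e j j := by
        simp [hA, Matrix.add_apply, Matrix.one_apply, Matrix.smul_apply, smul_eq_mul]
      rw [this]
      rcases (hdiag j j).2 with h | h
      · simp [h]
      · rw [h, mul_one]
        have : (1 : ℂ) + (z - 1) = z := by ring
        rw [this, hzabs]
    have hAoff : ∀ j i : Fin d, j ≠ i → A j i = 0 := by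
      intro j i hne
      simp [hA, Matrix.add_apply, Matrix.one_apply_ne hne, Matrix.smul_apply,
        smul_eq_mul, (hdiag j i).1 hne]
    have hisov : ∀ x : PiLp p (fun _ : Fin d => ℂ), ‖matrixLp p A x‖ = ‖x‖ := by
      intro x
      rw [PiLp.norm_eq_sum (by rw [← hp'def]; exact hp'pos),
        PiLp.norm_eq_sum (by rw [← hp'def]; exact hp'pos)]
      congr 1
      apply Finset.sum_congr rfl
      intro j _
      have hcoord : (matrixLp p A x) j = A j j * x j := by
        rw [matrixLp_apply]
        rw [Finset.sum_eq_single j]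
        · intro i _ hne
          rw [hAoff j i (Ne.symm hne), zero_mul]
        · intro h; exact absurd (Finset.mem_univ j) h
      rw [hcoord, norm_mul, hAdiagnorm j, one_mul]
    apply le_antisymm
    · apply ContinuousLinearMap.opNorm_le_bound _ zero_le_one
      intro x
      rw [hisov x, one_mul]
    · set δ : PiLp p (fun _ : Fin d => ℂ) :=
        (WithLp.equiv p (∀ _ : Fin d, ℂ)).symm (Pi.single ⟨0, hd⟩ 1) with hδ
      have h1 : ‖matrixLp p A δ‖ = 1 := by rw [hisov, hδnorm]
      have h2 := (matrixLp p A).le_opNorm δ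
      rw [h1, hδnorm] at h2
      linarith
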